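/- Let U, V be k-dimensional subspaces of F_q^n with U = rowspace(A) and V = rowspace(B), where A, B are k × n matrices over F_q in reduced row echelon form. If the identifying vectors satisfy v(A) = v(B), then d_S(U, V) = 2·d_R(C_A, C_B), where C_A and C_B denote the k × (n − k) submatrices of A and B obtained by deleting the pivot columns, and d_R denotes rank distance. -/

import Mathlib

open Module Matrix

/-- The subspace distance `d_S(U,V) = dim U + dim V - 2 dim (U ⊓ V)`. -/
noncomputable def subDist {F : Type*} [Field F] {n : ℕ}
    (U V : Submodule F (Fin n → F)) : ℕ :=
  finrank F U + finrank F V - 2 * finrank F (U ⊓ V : Submodule F (Fin n → F))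

/-- The rank distance `d_R(A,B) = rank (A - B)`. -/
noncomputable def rankDist {F : Type*} [Field F] {m n : ℕ}
    (A B : Matrix (Fin m) (Fin n) F) : ℕ :=
  (A - B).rank

/-- `A` is a `k × n` matrix in reduced row echelon form with pivot (leading one)
of row `i` in column `p i`: the pivots move strictly to the right, each pivot entry
is `1` and is the first nonzero entry of its row, and each pivot is the only
nonzero entry in its column. -/
def IsRREF {F : Type*} [Field F] {k n : ℕ}
    (A : Matrix (Fin k) (Fin n) F) (p : Fin k → Fin n) : Prop :=
  StrictMono p ∧ (∀ i, A i (p i) = 1) ∧ (∀ i j, j < p i → A i j = 0) ∧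
    (∀ i i', i' ≠ i → A i' (p i) = 0)

/-- The identifying vector of a matrix in RREF with pivot columns `p`,
as a Boolean vector of length `n` whose `1`s are exactly at the pivot positions. -/
def identifyingVector {k n : ℕ} (p : Fin k → Fin n) : Fin n → Bool :=
  fun j => decide (∃ i, p i = j)

/-- Evaluating a row combination of an RREF matrix at a pivot column recovers
the coefficient. -/
lemma vecMul_pivot {F : Type*} [Field F] {k n : ℕ}
    {A : Matrix (Fin k) (Fin n) F} {p : Fin k → Fin n} (hA : IsRREF A p)
    (y : Fin k → F) (i : Fin k) : (y ᵥ* A) (p i) = y i := by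
  obtain ⟨-, h1, -, h0⟩ := hA
  have : (y ᵥ* A) (p i) = ∑ i', y i' * A i' (p i) := by
    simp [Matrix.vecMul, dotProduct]
  rw [this, Finset.sum_eq_single i]
  · rw [h1 i, mul_one]
  · intro b _ hb; rw [h0 i b hb, mul_zero]
  · intro h; exact absurd (Finset.mem_univ i) h

theorem stmt_6 {F : Type*} [Field F] [Fintype F] {k n : ℕ}
    (A B : Matrix (Fin k) (Fin n) F) (pA pB : Fin k → Fin n)
    (hA : IsRREF A pA) (hB : IsRREF B pB)
    (hv : identifyingVector pA = identifyingVector pB)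
    (U V : Submodule F (Fin n → F))
    (hU : U = Submodule.span F (Set.range fun i => A i))
    (hV : V = Submodule.span F (Set.range fun i => B i))
    -- `c` enumerates, in increasing order, the `n - k` non-pivot columns
    (c : Fin (n - k) → Fin n) (hc : StrictMono c)
    (hcp : ∀ j, (∃ i, c i = j) ↔ ¬∃ i, pA i = j) :
    subDist U V = 2 * rankDist (A.submatrix id c) (B.submatrix id c) := by
  -- pA = pB
  have hpp : pA = pB := by
    haveI : WellFoundedLT (Fin k) := inferInstance
    refine (StrictMono.range_inj hA.1 hB.1).1 ?_
    ext j
    have := congrFun hv j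
    simp only [identifyingVector, decide_eq_decide] at this
    simpa [Set.mem_range] using this
  subst hpp
  set D := A - B with hD
  -- pivot columns of D vanish
  have hDpiv : ∀ j, (∃ i, pA i = j) → ∀ i', D i' j = 0 := by
    rintro j ⟨i, rfl⟩ i'
    by_cases h : i' = i
    · subst h; simp [hD, Matrix.sub_apply, hA.2.1 i', hB.2.1 i']
    · simp [hD, Matrix.sub_apply, hA.2.2.2 i i' h, hB.2.2.2 i i' h]
  -- rows of A (and B) are linearly independent
  have hindep : ∀ (M : Matrix (Fin k) (Fin n) F), IsRREF M pA →
      LinearIndependent F (fun i => M i) := by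
    intro M hM
    rw [Fintype.linearIndependent_iff]
    intro g hg i
    have h1 : (g ᵥ* M) = 0 := by
      funext j
      have : (g ᵥ* M) j = ∑ i', g i' • M i' j := by
        simp [Matrix.vecMul, dotProduct, smul_eq_mul]
      rw [this]
      calc ∑ i', g i' • M i' j = (∑ i', g i' • M i') j := by
            simp [Finset.sum_apply]
        _ = 0 := by rw [hg]; rfl
    have := vecMul_pivot hM g i
    rw [h1] at this
    exact this.symm
  have hUr : U = LinearMap.range A.vecMulLinear := by
    rw [hU, range_vecMulLinear]; rfl
  have hVr : V = LinearMap.range B.vecMulLinear := by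
    rw [hV, range_vecMulLinear]; rfl
  -- dimension of U and V is k
  have hdimU : finrank F U = k := by
    rw [hU]
    simpa using finrank_span_eq_card (hindep A hA)
  have hdimV : finrank F V = k := by
    rw [hV]
    simpa using finrank_span_eq_card (hindep B hB)
  -- U ⊓ V as image of kernel of D
  have hinter : U ⊓ V = Submodule.map A.vecMulLinear (LinearMap.ker D.vecMulLinear) := by
    ext x
    constructor
    · rintro ⟨hxU, hxV⟩
      rw [hUr] at hxU; rw [hVr] at hxV
      obtain ⟨y, hy⟩ := hxU
      obtain ⟨z, hz⟩ := hxV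
      simp only [Matrix.vecMulLinear_apply] at hy hz
      have hyz : y = z := by
        funext i
        have h1 := vecMul_pivot hA y i
        have h2 := vecMul_pivot hB z i
        rw [hy] at h1; rw [hz] at h2
        rw [← h1, ← h2]
      refine ⟨y, ?_, by simpa [Matrix.vecMulLinear_apply] using hy⟩
      show y ∈ LinearMap.ker D.vecMulLinear
      rw [LinearMap.mem_ker]
      show y ᵥ* D = 0
      rw [hD, Matrix.vecMul_sub, hy, hyz, hz, sub_self]
    · rintro ⟨y, hy, rfl⟩
      have hy' : y ᵥ* A = y ᵥ* B := by
        have : y ᵥ* D = 0 := hy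
        rw [hD, Matrix.vecMul_sub, sub_eq_zero] at this
        exact this
      constructor
      · rw [hUr]; exact ⟨y, rfl⟩
      · rw [hVr]; exact ⟨y, by simp [Matrix.vecMulLinear_apply, hy']⟩
  -- injectivity of A.vecMulLinear
  have hinj : Function.Injective A.vecMulLinear := by
    rw [← LinearMap.ker_eq_bot]
    rw [LinearMap.ker_eq_bot']
    intro y hy
    simp only [Matrix.vecMulLinear_apply] at hy
    funext i
    have := vecMul_pivot hA y i
    rw [hy] at this
    exact this.symm
  have hdimI : finrank F ↥(U ⊓ V) = finrank F ↥(LinearMap.ker D.vecMulLinear) := by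
    rw [hinter]
    exact (LinearEquiv.finrank_eq
      (Submodule.equivMapOfInjective A.vecMulLinear hinj
        (LinearMap.ker D.vecMulLinear))).symm
  -- rank-nullity
  have hrn : finrank F ↥(LinearMap.range D.vecMulLinear)
      + finrank F ↥(LinearMap.ker D.vecMulLinear) = k := by
    have := LinearMap.finrank_range_add_finrank_ker D.vecMulLinear
    simpa using this
  have hrange : finrank F ↥(LinearMap.range D.vecMulLinear) = D.rank := by
    rw [range_vecMulLinear, Matrix.rank_eq_finrank_span_row]
  -- rank of D equals rank of its non-pivot-column submatrix
  have hsub : (D.submatrix id c).rank = D.rank := by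
    rw [Matrix.rank_eq_finrank_span_cols, Matrix.rank_eq_finrank_span_cols]
    have hspan : Submodule.span F (Set.range (D.submatrix id c)ᵀ)
        = Submodule.span F (Set.range Dᵀ) := by
      apply le_antisymm
      · apply Submodule.span_mono
        rintro _ ⟨j, rfl⟩
        exact ⟨c j, rfl⟩
      · rw [Submodule.span_le]
        rintro _ ⟨j, rfl⟩
        by_cases hj : ∃ i, pA i = j
        · have : Dᵀ j = 0 := by
            funext i'; exact hDpiv j hj i'
          rw [this]; exact Submodule.zero_mem _
        · obtain ⟨i, rfl⟩ := (hcp j).2 hj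
          exact Submodule.subset_span ⟨i, rfl⟩
    exact congrArg (fun S : Submodule F (Fin k → F) => finrank F S) hspan
  have hDsub : A.submatrix id c - B.submatrix id c = D.submatrix id c := by
    ext i j; simp [hD, Matrix.sub_apply]
  have hrk : D.rank ≤ k := Matrix.rank_le_height D
  rw [subDist, rankDist, hDsub, hsub, hdimU, hdimV, hdimI]
  omega
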